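/- Let d ≥ 2, let X_j ⊆ ℝ be nonempty open intervals for j = 1,…,d and X = ∏_j X_j. Say that a differentiable function h : X → ℝ satisfies the rank condition at x_{−d} ∈ ∏_{j<d} X_j if there exist points x_{d,1},…,x_{d,d−1} ∈ X_d such that, writing x*_l = (x_{−d}, x_{d,l}), the (d−1)×(d−1) matrix with (l, j) entry ∂_{x_j} h(x*_l), j = 1,…,d−1, is nonsingular. Suppose π, π̂ : ℝ^d_{++} → ℝ are differentiable and positively homogeneous of degree 1; g_j, ĝ_j : X_j → ℝ_{++} are differentiable with nowhere-vanishing derivatives; g_d and ĝ_d are the identity (g_d(x) = ĝ_d(x) = x); there exists x₀ ∈ X with g(x₀) = ĝ(x₀); and π(g(x)) = π̂(ĝ(x)) =: π̃(x) for all x ∈ X, where π̃ satisfies the rank condition at every x_{−d} ∈ ∏_{j<d} X_j. Then g_j = ĝ_j on X_j for every j = 1,…,d. -/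

import Mathlib

/-- The rank condition of Definition 4.1 for a differentiable function
`h : ℝ^{d+1} → ℝ` at a point `xm ∈ ∏_{j < d} X_j`: there are `d` values of the last
coordinate at which the matrix of partial derivatives with respect to the first `d`
coordinates is nonsingular. -/
def ProxyRankCondition (d : ℕ) (X : Set (Fin (d + 1) → ℝ)) (h : (Fin (d + 1) → ℝ) → ℝ)
    (xm : Fin d → ℝ) : Prop :=
  ∃ xd : Fin d → ℝ, (∀ l : Fin d, (Fin.snoc xm (xd l) : Fin (d + 1) → ℝ) ∈ X) ∧
    (Matrix.of fun l j : Fin d =>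
        fderiv ℝ h (Fin.snoc xm (xd l)) (Pi.single (Fin.castSucc j) 1)).det ≠ 0

/- Auxiliary lemmas -/

/-- Euler's homogeneous function theorem for degree-1 positively homogeneous functions. -/
lemma euler_hom {n : ℕ} (f : (Fin n → ℝ) → ℝ) (p : Fin n → ℝ)
    (hdiff : DifferentiableAt ℝ f p)
    (hhom : ∀ l : ℝ, 0 < l → f (l • p) = l * f p) :
    fderiv ℝ f p p = f p := by
  have hs : HasDerivAt (fun l : ℝ => l • p) p 1 := by
    simpa using (hasDerivAt_id (1:ℝ)).smul_const p
  have hfd : HasFDerivAt f (fderiv ℝ f p) ((1:ℝ) • p) := by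
    rw [one_smul]; exact hdiff.hasFDerivAt
  have h1 : HasDerivAt (fun l : ℝ => f (l • p)) (fderiv ℝ f p p) 1 := by
    exact hfd.comp_hasDerivAt 1 hs
  have h2 : HasDerivAt (fun l : ℝ => l * f p) (f p) 1 := by
    simpa using (hasDerivAt_id (1:ℝ)).mul_const (f p)
  have heq : (fun l : ℝ => f (l • p)) =ᶠ[nhds 1] fun l => l * f p := by
    filter_upwards [Ioi_mem_nhds (by norm_num : (0:ℝ) < 1)] with l hl
    exact hhom l hl
  have := heq.deriv_eq
  rw [h1.deriv, h2.deriv] at this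
  exact this

lemma chain_hasFDerivAt {n : ℕ} (f : (Fin n → ℝ) → ℝ) (g : Fin n → ℝ → ℝ) (x : Fin n → ℝ)
    (hg : ∀ j, DifferentiableAt ℝ (g j) (x j))
    (hf : DifferentiableAt ℝ f (fun j => g j (x j))) :
    HasFDerivAt (fun y => f (fun j => g j (y j)))
      ((fderiv ℝ f (fun j => g j (x j))).comp
        (ContinuousLinearMap.pi (fun j => (deriv (g j) (x j)) •
          (ContinuousLinearMap.proj j : (Fin n → ℝ) →L[ℝ] ℝ)))) x := by
  have hG : HasFDerivAt (fun y : Fin n → ℝ => (fun j => g j (y j)))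
      (ContinuousLinearMap.pi (fun j => (deriv (g j) (x j)) •
        (ContinuousLinearMap.proj j : (Fin n → ℝ) →L[ℝ] ℝ))) x := by
    apply hasFDerivAt_pi.2
    intro j
    exact (hg j).hasDerivAt.comp_hasFDerivAt x (hasFDerivAt_apply j x)
  exact hf.hasFDerivAt.comp x hG

lemma chain_apply_single {n : ℕ} (f : (Fin n → ℝ) → ℝ) (g : Fin n → ℝ → ℝ) (x : Fin n → ℝ)
    (hg : ∀ j, DifferentiableAt ℝ (g j) (x j))
    (hf : DifferentiableAt ℝ f (fun j => g j (x j))) (i : Fin n) :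
    fderiv ℝ (fun y => f (fun j => g j (y j))) x (Pi.single i 1)
      = deriv (g i) (x i) * fderiv ℝ f (fun j => g j (x j)) (Pi.single i 1) := by
  rw [(chain_hasFDerivAt f g x hg hf).fderiv]
  have : (ContinuousLinearMap.pi (fun j => (deriv (g j) (x j)) •
      (ContinuousLinearMap.proj j : (Fin n → ℝ) →L[ℝ] ℝ))) (Pi.single i 1)
      = Pi.single i (deriv (g i) (x i)) := by
    ext k
    simp [ContinuousLinearMap.pi_apply, Pi.single_apply]
    by_cases h : k = i <;> simp [h]
  simp only [ContinuousLinearMap.comp_apply, this]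
  have h2 : (Pi.single i (deriv (g i) (x i)) : Fin n → ℝ)
      = deriv (g i) (x i) • (Pi.single i 1 : Fin n → ℝ) := by
    ext k; by_cases h : k = i <;> simp [Pi.single_apply, h]
  rw [h2, map_smul, smul_eq_mul]

lemma fderiv_apply_sum_single {n : ℕ} (L : (Fin n → ℝ) →L[ℝ] ℝ) (p : Fin n → ℝ) :
    L p = ∑ i, L (Pi.single i 1) * p i := by
  have hp : p = ∑ i, p i • (Pi.single i 1 : Fin n → ℝ) := by
    ext k
    simp [Finset.sum_apply, Pi.single_apply]
  conv_lhs => rw [hp]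
  rw [map_sum]
  refine Finset.sum_congr rfl fun i _ => ?_
  rw [map_smul, smul_eq_mul]; ring

lemma euler_sum {n : ℕ} (f : (Fin n → ℝ) → ℝ) (g : Fin n → ℝ → ℝ) (x : Fin n → ℝ)
    (hg : ∀ j, DifferentiableAt ℝ (g j) (x j))
    (hgd : ∀ j, deriv (g j) (x j) ≠ 0)
    (hf : DifferentiableAt ℝ f (fun j => g j (x j)))
    (hhom : ∀ l : ℝ, 0 < l → f (l • fun j => g j (x j)) = l * f (fun j => g j (x j))) :
    ∑ i, fderiv ℝ (fun y => f (fun j => g j (y j))) x (Pi.single i 1)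
        * (g i (x i) / deriv (g i) (x i)) = f (fun j => g j (x j)) := by
  have h1 : ∀ i : Fin n, fderiv ℝ (fun y => f (fun j => g j (y j))) x (Pi.single i 1)
      * (g i (x i) / deriv (g i) (x i))
      = fderiv ℝ f (fun j => g j (x j)) (Pi.single i 1) * g i (x i) := by
    intro i
    rw [chain_apply_single f g x hg hf i]
    have h := hgd i
    field_simp
  calc ∑ i, fderiv ℝ (fun y => f (fun j => g j (y j))) x (Pi.single i 1)
        * (g i (x i) / deriv (g i) (x i))
      = ∑ i, fderiv ℝ f (fun j => g j (x j)) (Pi.single i 1) * g i (x i) :=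
        Finset.sum_congr rfl fun i _ => h1 i
    _ = fderiv ℝ f (fun j => g j (x j)) (fun j => g j (x j)) :=
        (fderiv_apply_sum_single _ _).symm
    _ = f (fun j => g j (x j)) := euler_hom f _ hf hhom

/-- Theorem 4.1(i): identification of the price-proxy functions. If two collections of
proxy functions `g`, `ĝ` (differentiable, strictly positive, with nowhere-vanishing
derivatives, the last one being the identity—the observed price) generate the same
composite profit function `π̃(x) = π(g(x)) = π̂(ĝ(x))` for degree-1 homogeneous
differentiable profit functions, agree at one point, and `π̃` satisfies the rank
condition everywhere, then `g_j = ĝ_j` on `X_j` for every `j`. -/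
theorem stmt16 (d : ℕ) (hd : 1 ≤ d)
    (prof profhat : (Fin (d + 1) → ℝ) → ℝ)
    (hprofdiff : ∀ p : Fin (d + 1) → ℝ, (∀ i, 0 < p i) → DifferentiableAt ℝ prof p)
    (hprofhatdiff : ∀ p : Fin (d + 1) → ℝ, (∀ i, 0 < p i) → DifferentiableAt ℝ profhat p)
    (hprofhom : ∀ p : Fin (d + 1) → ℝ, (∀ i, 0 < p i) → ∀ l : ℝ, 0 < l →
      prof (l • p) = l * prof p)
    (hprofhathom : ∀ p : Fin (d + 1) → ℝ, (∀ i, 0 < p i) → ∀ l : ℝ, 0 < l →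
      profhat (l • p) = l * profhat p)
    (Xs : Fin (d + 1) → Set ℝ) (hXne : ∀ j, (Xs j).Nonempty)
    (hXopen : ∀ j, IsOpen (Xs j)) (hXint : ∀ j, ∃ c c' : ℝ, Xs j = Set.Ioo c c')
    (g ghat : Fin (d + 1) → ℝ → ℝ)
    (hgdiff : ∀ j, ∀ x ∈ Xs j, DifferentiableAt ℝ (g j) x)
    (hghatdiff : ∀ j, ∀ x ∈ Xs j, DifferentiableAt ℝ (ghat j) x)
    (hgpos : ∀ j, ∀ x ∈ Xs j, 0 < g j x)
    (hghatpos : ∀ j, ∀ x ∈ Xs j, 0 < ghat j x)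
    (hgderiv : ∀ j, ∀ x ∈ Xs j, deriv (g j) x ≠ 0)
    (hghatderiv : ∀ j, ∀ x ∈ Xs j, deriv (ghat j) x ≠ 0)
    (hlast : ∀ x ∈ Xs (Fin.last d), g (Fin.last d) x = x ∧ ghat (Fin.last d) x = x)
    (x0 : Fin (d + 1) → ℝ) (hx0 : ∀ j, x0 j ∈ Xs j)
    (hx0eq : ∀ j, g j (x0 j) = ghat j (x0 j))
    (hsame : ∀ x : Fin (d + 1) → ℝ, (∀ j, x j ∈ Xs j) →
      prof (fun j => g j (x j)) = profhat (fun j => ghat j (x j)))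
    (hrank : ∀ xm : Fin d → ℝ, (∀ j : Fin d, xm j ∈ Xs (Fin.castSucc j)) →
      ProxyRankCondition d {x : Fin (d + 1) → ℝ | ∀ j, x j ∈ Xs j}
        (fun x => prof (fun j => g j (x j))) xm) :
    ∀ j, ∀ x ∈ Xs j, g j x = ghat j x := by
  classical
  set X : Set (Fin (d + 1) → ℝ) := {x | ∀ j, x j ∈ Xs j} with hXdef
  have hXopen' : IsOpen X := by
    have : X = ⋂ j, (fun x : Fin (d + 1) → ℝ => x j) ⁻¹' Xs j := by
      ext y; simp [hXdef, Set.mem_iInter]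
    rw [this]
    exact isOpen_iInter_of_finite fun j => (hXopen j).preimage (continuous_apply j)
  -- derivative of the last proxy is 1
  have hderivlast : ∀ x ∈ Xs (Fin.last d), deriv (g (Fin.last d)) x = 1 := by
    intro x hx
    have he : g (Fin.last d) =ᶠ[nhds x] id := by
      filter_upwards [(hXopen (Fin.last d)).mem_nhds hx] with y hy
      exact (hlast y hy).1
    rw [he.deriv_eq]; simp
  have hderivlast' : ∀ x ∈ Xs (Fin.last d), deriv (ghat (Fin.last d)) x = 1 := by
    intro x hx
    have he : ghat (Fin.last d) =ᶠ[nhds x] id := by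
      filter_upwards [(hXopen (Fin.last d)).mem_nhds hx] with y hy
      exact (hlast y hy).2
    rw [he.deriv_eq]; simp
  -- ratio functions
  set ρ : Fin (d + 1) → ℝ → ℝ := fun j t => g j t / deriv (g j) t with hρdef
  set ρh : Fin (d + 1) → ℝ → ℝ := fun j t => ghat j t / deriv (ghat j) t with hρhdef
  -- the key sum identity
  have keysum : ∀ x ∈ X,
      ∑ i, fderiv ℝ (fun y => prof (fun j => g j (y j))) x (Pi.single i 1)
        * (ρ i (x i) - ρh i (x i)) = 0 := by
    intro x hx
    have hxj : ∀ j, x j ∈ Xs j := hx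
    have hpg : ∀ i, 0 < g i (x i) := fun i => hgpos i (x i) (hxj i)
    have hpgh : ∀ i, 0 < ghat i (x i) := fun i => hghatpos i (x i) (hxj i)
    have hs1 : ∑ i, fderiv ℝ (fun y => prof (fun j => g j (y j))) x (Pi.single i 1)
        * ρ i (x i) = prof (fun j => g j (x j)) :=
      euler_sum prof g x (fun j => hgdiff j (x j) (hxj j))
        (fun j => hgderiv j (x j) (hxj j)) (hprofdiff _ hpg)
        (fun l hl => hprofhom _ hpg l hl)
    have heq : (fun y => prof (fun j => g j (y j)))
        =ᶠ[nhds x] (fun y => profhat (fun j => ghat j (y j))) := by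
      filter_upwards [hXopen'.mem_nhds hx] with y hy
      exact hsame y hy
    have hfd : fderiv ℝ (fun y => prof (fun j => g j (y j))) x
        = fderiv ℝ (fun y => profhat (fun j => ghat j (y j))) x := heq.fderiv_eq
    have hs2 : ∑ i, fderiv ℝ (fun y => prof (fun j => g j (y j))) x (Pi.single i 1)
        * ρh i (x i) = prof (fun j => g j (x j)) := by
      rw [hfd, hsame x hxj]
      exact euler_sum profhat ghat x (fun j => hghatdiff j (x j) (hxj j))
        (fun j => hghatderiv j (x j) (hxj j)) (hprofhatdiff _ hpgh)
        (fun l hl => hprofhathom _ hpgh l hl)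
    calc ∑ i, fderiv ℝ (fun y => prof (fun j => g j (y j))) x (Pi.single i 1)
          * (ρ i (x i) - ρh i (x i))
        = (∑ i, fderiv ℝ (fun y => prof (fun j => g j (y j))) x (Pi.single i 1) * ρ i (x i))
          - ∑ i, fderiv ℝ (fun y => prof (fun j => g j (y j))) x (Pi.single i 1)
            * ρh i (x i) := by
          rw [← Finset.sum_sub_distrib]
          exact Finset.sum_congr rfl fun i _ => by ring
      _ = 0 := by rw [hs1, hs2, sub_self]
  -- ratio identification on the first d coordinates
  have hratio : ∀ j0 : Fin d, ∀ t ∈ Xs (Fin.castSucc j0),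
      ρ (Fin.castSucc j0) t = ρh (Fin.castSucc j0) t := by
    intro j0 t ht
    set xm : Fin d → ℝ := Function.update (fun j => x0 (Fin.castSucc j)) j0 t with hxmdef
    have hxm : ∀ j : Fin d, xm j ∈ Xs (Fin.castSucc j) := by
      intro j
      by_cases h : j = j0
      · subst h; simpa [hxmdef] using ht
      · simpa [hxmdef, Function.update_of_ne h] using hx0 (Fin.castSucc j)
    obtain ⟨xd, hmem, hdet⟩ := hrank xm hxm
    set c : Fin d → ℝ := fun j => ρ (Fin.castSucc j) (xm j) - ρh (Fin.castSucc j) (xm j)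
      with hcdef
    have hmul : (Matrix.of fun l j : Fin d =>
        fderiv ℝ (fun x => prof (fun j => g j (x j))) (Fin.snoc xm (xd l))
          (Pi.single (Fin.castSucc j) 1)).mulVec c = 0 := by
      funext l
      have hxl : (Fin.snoc xm (xd l) : Fin (d + 1) → ℝ) ∈ X := hmem l
      have hkey := keysum _ hxl
      rw [Fin.sum_univ_castSucc] at hkey
      have hlastmem : xd l ∈ Xs (Fin.last d) := by
        have := hxl (Fin.last d); simpa using this
      have hlast0 : ρ (Fin.last d) ((Fin.snoc xm (xd l) : Fin (d + 1) → ℝ) (Fin.last d))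
          - ρh (Fin.last d) ((Fin.snoc xm (xd l) : Fin (d + 1) → ℝ) (Fin.last d)) = 0 := by
        simp only [Fin.snoc_last, hρdef, hρhdef]
        rw [(hlast _ hlastmem).1, (hlast _ hlastmem).2,
          hderivlast _ hlastmem, hderivlast' _ hlastmem, sub_self]
      rw [hlast0, mul_zero, add_zero] at hkey
      simp only [Matrix.mulVec, dotProduct, Matrix.of_apply, Pi.zero_apply]
      rw [← hkey]
      exact Finset.sum_congr rfl fun j _ => by
        simp [hcdef, Fin.snoc_castSucc]
    have hc0 : c = 0 := Matrix.eq_zero_of_mulVec_eq_zero hdet hmul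
    have := congrFun hc0 j0
    simp only [hcdef, Pi.zero_apply, sub_eq_zero] at this
    simpa [hxmdef] using this
  -- final step: solve the ODE on each interval
  intro j x hx
  induction j using Fin.lastCases with
  | last => rw [(hlast x hx).1, (hlast x hx).2]
  | cast j0 =>
    obtain ⟨a, b, hab⟩ := hXint (Fin.castSucc j0)
    set s : Set ℝ := Set.Ioo a b with hsdef
    have hsX : Xs (Fin.castSucc j0) = s := hab
    have hconv : Convex ℝ s := convex_Ioo a b
    have hsopen : IsOpen s := isOpen_Ioo
    -- the quotient has zero derivative
    have hq0 : ∀ t ∈ s, HasDerivAt (fun u => g (Fin.castSucc j0) u / ghat (Fin.castSucc j0) u)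
        0 t := by
      intro t hts
      have htX : t ∈ Xs (Fin.castSucc j0) := hsX ▸ hts
      have hne : ghat (Fin.castSucc j0) t ≠ 0 := (hghatpos _ t htX).ne'
      have hcross : deriv (g (Fin.castSucc j0)) t * ghat (Fin.castSucc j0) t
          - g (Fin.castSucc j0) t * deriv (ghat (Fin.castSucc j0)) t = 0 := by
        have hr := hratio j0 t htX
        simp only [hρdef, hρhdef] at hr
        have h1 := hgderiv (Fin.castSucc j0) t htX
        have h2 := hghatderiv (Fin.castSucc j0) t htX
        field_simp at hr
        linarith [hr]
      have := ((hgdiff _ t htX).hasDerivAt.div (hghatdiff _ t htX).hasDerivAt hne)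
      rw [hcross, zero_div] at this
      exact this
    have hdiffq : DifferentiableOn ℝ
        (fun u => g (Fin.castSucc j0) u / ghat (Fin.castSucc j0) u) s :=
      fun t hts => ((hq0 t hts).differentiableAt).differentiableWithinAt
    have hfzero : ∀ t ∈ s, fderivWithin ℝ
        (fun u => g (Fin.castSucc j0) u / ghat (Fin.castSucc j0) u) s t = 0 := by
      intro t hts
      rw [fderivWithin_of_isOpen hsopen hts, (hq0 t hts).hasFDerivAt.fderiv]
      ext
      simp
    have hx0mem : x0 (Fin.castSucc j0) ∈ s := hsX ▸ hx0 (Fin.castSucc j0)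
    have hxmem : x ∈ s := hsX ▸ hx
    have hconst := hconv.is_const_of_fderivWithin_eq_zero hdiffq hfzero hxmem hx0mem
    have hne : ghat (Fin.castSucc j0) x ≠ 0 := (hghatpos _ x hx).ne'
    have hne0 : ghat (Fin.castSucc j0) (x0 (Fin.castSucc j0)) ≠ 0 :=
      (hghatpos _ _ (hx0 (Fin.castSucc j0))).ne'
    rw [hx0eq (Fin.castSucc j0), div_self hne0] at hconst
    field_simp at hconst
    exact hconst
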